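/- Let g ∈ H, the Sobolev space of functions on (-1,1) with ∫ g dϱ = 0, g ∈ L²(ϱ), g' ∈ L²(μ_sc), equipped with norm ‖g‖² = ∫ g'(x)² μ_sc(dx). Then for all x, y ∈ (-1,1), |g(x) - g(y)| ≤ 2‖g‖·|arcsin(x) - arcsin(y)|^{1/2}; in particular g is (1/4)-Hölder continuous on [-1,1] with |g(x)-g(y)| ≤ C‖g‖·|x-y|^{1/4} for a universal constant C. -/

import Mathlib

open MeasureTheory Real Set

/-- Density of the arcsine law on `(-1,1)`. -/
noncomputable def arcsineDensity (x : ℝ) : ℝ := 1 / (Real.pi * Real.sqrt (1 - x ^ 2))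

/-- Density of the semicircle law on `(-1,1)`. -/
noncomputable def semicircleDensity (x : ℝ) : ℝ := (2 / Real.pi) * Real.sqrt (1 - x ^ 2)

/-- From the AM-GM family of bounds to the Cauchy-Schwarz bound. -/
private lemma amgm_to_sqrt {A B c : ℝ} (hA : 0 ≤ A) (hB : 0 ≤ B)
    (h : ∀ ε : ℝ, 0 < ε → c ≤ (ε * A + (1 / ε) * B) / 2) : c ≤ Real.sqrt (A * B) := by
  refine le_of_forall_pos_le_add fun δ hδ => ?_
  rcases eq_or_lt_of_le hA with hA0 | hA0
  · have hε : (0 : ℝ) < B / (2 * δ) + 1 := by positivity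
    have h1 := h _ hε
    have hB2 : (1 / (B / (2 * δ) + 1)) * B ≤ 2 * δ := by
      rw [div_mul_eq_mul_div, one_mul, div_le_iff₀ hε]
      have hrw : 2 * δ * (B / (2 * δ) + 1) = B + 2 * δ := by field_simp
      rw [hrw]; linarith
    have hs : 0 ≤ Real.sqrt (A * B) := Real.sqrt_nonneg _
    calc c ≤ ((B / (2 * δ) + 1) * A + (1 / (B / (2 * δ) + 1)) * B) / 2 := h1
      _ ≤ δ := by rw [← hA0]; nlinarith
      _ ≤ Real.sqrt (A * B) + δ := by linarith
  · set s := Real.sqrt (A * B) with hsdef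
    have hs0 : 0 ≤ s := Real.sqrt_nonneg _
    have hs2 : s ^ 2 = A * B := Real.sq_sqrt (by positivity)
    set ε := (s + δ) / A with hε
    have hεpos : 0 < ε := by positivity
    have hεA : ε * A = s + δ := by rw [hε]; field_simp
    have h2 : (1 / ε) * B ≤ s := by
      rw [hε, one_div_div, div_mul_eq_mul_div, div_le_iff₀ (by positivity)]
      nlinarith
    have h1 := h ε hεpos
    calc c ≤ (ε * A + (1 / ε) * B) / 2 := h1
      _ ≤ (s + δ + s) / 2 := by rw [hεA]; linarith
      _ ≤ s + δ := by linarith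

private lemma sqrt_sub_le_sqrt_sub {a b : ℝ} (hb : 0 ≤ b) (hab : b ≤ a) :
    Real.sqrt a - Real.sqrt b ≤ Real.sqrt (a - b) := by
  have h1 := Real.sq_sqrt hb
  have h2 := Real.sq_sqrt (hb.trans hab)
  have h3 := Real.sq_sqrt (sub_nonneg.2 hab)
  have n1 := Real.sqrt_nonneg a
  have n2 := Real.sqrt_nonneg b
  have n3 := Real.sqrt_nonneg (a - b)
  nlinarith [mul_nonneg n2 n3]

private lemma hasDerivAt_F1 {t : ℝ} (h : t < 1) :
    HasDerivAt (fun t : ℝ => (-2) * Real.sqrt (1 - t)) ((Real.sqrt (1 - t))⁻¹) t := by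
  have h0 : (1 : ℝ) - t ≠ 0 := ne_of_gt (by linarith)
  have hs : Real.sqrt (1 - t) ≠ 0 := Real.sqrt_ne_zero'.2 (by linarith)
  have h1 : HasDerivAt (fun t : ℝ => 1 - t) (0 - 1) t :=
    (hasDerivAt_const t (1 : ℝ)).sub (hasDerivAt_id t)
  have h2 := (h1.sqrt h0).const_mul (-2 : ℝ)
  refine h2.congr_deriv ?_
  field_simp
  norm_num

private lemma hasDerivAt_F2 {t : ℝ} (h : -1 < t) :
    HasDerivAt (fun t : ℝ => 2 * Real.sqrt (1 + t)) ((Real.sqrt (1 + t))⁻¹) t := by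
  have h0 : (1 : ℝ) + t ≠ 0 := ne_of_gt (by linarith)
  have hs : Real.sqrt (1 + t) ≠ 0 := Real.sqrt_ne_zero'.2 (by linarith)
  have h1 : HasDerivAt (fun t : ℝ => 1 + t) (0 + 1) t :=
    (hasDerivAt_const t (1 : ℝ)).add (hasDerivAt_id t)
  have h2 := (h1.sqrt h0).const_mul (2 : ℝ)
  refine h2.congr_deriv ?_
  field_simp
  norm_num

private lemma pos_one_sub_sq {y x t : ℝ} (hy1 : -1 < y) (hx2 : x < 1) (ht : t ∈ Icc y x) :
    0 < 1 - t ^ 2 := by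
  have h1 : -1 < t := lt_of_lt_of_le hy1 ht.1
  have h2 : t < 1 := lt_of_le_of_lt ht.2 hx2
  nlinarith

private lemma cont_inv_sqrt {y x : ℝ} (hy1 : -1 < y) (hx2 : x < 1) :
    ContinuousOn (fun t : ℝ => (Real.sqrt (1 - t ^ 2))⁻¹) (Icc y x) := by
  refine ContinuousOn.inv₀ (Continuous.continuousOn (by fun_prop)) fun t ht => ?_
  exact Real.sqrt_ne_zero'.2 (pos_one_sub_sq hy1 hx2 ht)

/-- FTC for arcsin. -/
private lemma integral_inv_sqrt_eq {y x : ℝ} (hy1 : -1 < y) (hx2 : x < 1) (hyx : y ≤ x) :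
    (∫ t in y..x, (Real.sqrt (1 - t ^ 2))⁻¹) = Real.arcsin x - Real.arcsin y := by
  apply intervalIntegral.integral_eq_sub_of_hasDerivAt
  · intro t ht
    rw [uIcc_of_le hyx] at ht
    have h1 : -1 < t := lt_of_lt_of_le hy1 ht.1
    have h2 : t < 1 := lt_of_le_of_lt ht.2 hx2
    simpa [one_div] using Real.hasDerivAt_arcsin (ne_of_gt h1) (ne_of_lt h2)
  · apply ContinuousOn.intervalIntegrable
    rw [uIcc_of_le hyx]
    exact cont_inv_sqrt hy1 hx2

private lemma integral_inv_sqrt_bound {y x : ℝ} (hy1 : -1 < y) (hx2 : x < 1) (hyx : y ≤ x) :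
    (∫ t in y..x, (Real.sqrt (1 - t ^ 2))⁻¹) ≤ 4 * Real.sqrt (x - y) := by
  have hic : Icc y x ⊆ Icc y x := subset_rfl
  have hint1 : IntervalIntegrable (fun t : ℝ => (Real.sqrt (1 - t))⁻¹) volume y x := by
    apply ContinuousOn.intervalIntegrable
    rw [uIcc_of_le hyx]
    refine ContinuousOn.inv₀ (Continuous.continuousOn (by fun_prop)) fun t ht => ?_
    exact Real.sqrt_ne_zero'.2 (by nlinarith [ht.2])
  have hint2 : IntervalIntegrable (fun t : ℝ => (Real.sqrt (1 + t))⁻¹) volume y x := by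
    apply ContinuousOn.intervalIntegrable
    rw [uIcc_of_le hyx]
    refine ContinuousOn.inv₀ (Continuous.continuousOn (by fun_prop)) fun t ht => ?_
    exact Real.sqrt_ne_zero'.2 (by nlinarith [ht.1])
  have hint0 : IntervalIntegrable (fun t : ℝ => (Real.sqrt (1 - t ^ 2))⁻¹) volume y x := by
    apply ContinuousOn.intervalIntegrable
    rw [uIcc_of_le hyx]
    exact cont_inv_sqrt hy1 hx2
  have hptw : ∀ t ∈ Icc y x,
      (Real.sqrt (1 - t ^ 2))⁻¹ ≤ (Real.sqrt (1 - t))⁻¹ + (Real.sqrt (1 + t))⁻¹ := by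
    intro t ht
    have h1 : -1 < t := lt_of_lt_of_le hy1 ht.1
    have h2 : t < 1 := lt_of_le_of_lt ht.2 hx2
    have hu : 0 < Real.sqrt (1 - t) := Real.sqrt_pos.2 (by linarith)
    have hv : 0 < Real.sqrt (1 + t) := Real.sqrt_pos.2 (by linarith)
    have hfac : Real.sqrt (1 - t ^ 2) = Real.sqrt (1 - t) * Real.sqrt (1 + t) := by
      rw [← Real.sqrt_mul (by linarith)]; ring_nf
    have hu2 : Real.sqrt (1 - t) ^ 2 = 1 - t := Real.sq_sqrt (by linarith)
    have hv2 : Real.sqrt (1 + t) ^ 2 = 1 + t := Real.sq_sqrt (by linarith)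
    have hkey : 1 ≤ Real.sqrt (1 - t) + Real.sqrt (1 + t) := by
      nlinarith [mul_nonneg hu.le hv.le]
    rw [hfac, mul_inv]
    calc (Real.sqrt (1 - t))⁻¹ * (Real.sqrt (1 + t))⁻¹
        = 1 * ((Real.sqrt (1 - t))⁻¹ * (Real.sqrt (1 + t))⁻¹) := by ring
      _ ≤ (Real.sqrt (1 - t) + Real.sqrt (1 + t)) *
          ((Real.sqrt (1 - t))⁻¹ * (Real.sqrt (1 + t))⁻¹) := by
          apply mul_le_mul_of_nonneg_right hkey; positivity
      _ = (Real.sqrt (1 - t))⁻¹ + (Real.sqrt (1 + t))⁻¹ := by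
          field_simp
          ring
  have hmono : (∫ t in y..x, (Real.sqrt (1 - t ^ 2))⁻¹) ≤
      ∫ t in y..x, ((Real.sqrt (1 - t))⁻¹ + (Real.sqrt (1 + t))⁻¹) :=
    intervalIntegral.integral_mono_on hyx hint0 (hint1.add hint2) hptw
  have hv1 : (∫ t in y..x, (Real.sqrt (1 - t))⁻¹) =
      (-2) * Real.sqrt (1 - x) - (-2) * Real.sqrt (1 - y) := by
    apply intervalIntegral.integral_eq_sub_of_hasDerivAt
    · intro t ht
      rw [uIcc_of_le hyx] at ht
      exact hasDerivAt_F1 (lt_of_le_of_lt ht.2 hx2)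
    · exact hint1
  have hv2 : (∫ t in y..x, (Real.sqrt (1 + t))⁻¹) =
      2 * Real.sqrt (1 + x) - 2 * Real.sqrt (1 + y) := by
    apply intervalIntegral.integral_eq_sub_of_hasDerivAt
    · intro t ht
      rw [uIcc_of_le hyx] at ht
      exact hasDerivAt_F2 (lt_of_lt_of_le hy1 ht.1)
    · exact hint2
  have hd1 : Real.sqrt (1 - y) - Real.sqrt (1 - x) ≤ Real.sqrt (x - y) := by
    have := sqrt_sub_le_sqrt_sub (a := 1 - y) (b := 1 - x) (by linarith) (by linarith)
    rwa [show (1 : ℝ) - y - (1 - x) = x - y by ring] at this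
  have hd2 : Real.sqrt (1 + x) - Real.sqrt (1 + y) ≤ Real.sqrt (x - y) := by
    have := sqrt_sub_le_sqrt_sub (a := 1 + x) (b := 1 + y) (by linarith) (by linarith)
    rwa [show (1 : ℝ) + x - (1 + y) = x - y by ring] at this
  calc (∫ t in y..x, (Real.sqrt (1 - t ^ 2))⁻¹)
      ≤ ∫ t in y..x, ((Real.sqrt (1 - t))⁻¹ + (Real.sqrt (1 + t))⁻¹) := hmono
    _ = ((-2) * Real.sqrt (1 - x) - (-2) * Real.sqrt (1 - y)) +
        (2 * Real.sqrt (1 + x) - 2 * Real.sqrt (1 + y)) := by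
        rw [intervalIntegral.integral_add hint1 hint2, hv1, hv2]
    _ ≤ 4 * Real.sqrt (x - y) := by linarith

private lemma sqrt_sqrt_eq_rpow {z : ℝ} (hz : 0 ≤ z) :
    Real.sqrt (Real.sqrt z) = z ^ ((1 : ℝ) / 4) := by
  rw [Real.sqrt_eq_rpow, Real.sqrt_eq_rpow, ← Real.rpow_mul hz]
  norm_num

set_option maxHeartbeats 1000000 in
private lemma key_bound (g g' : ℝ → ℝ)
    (hderiv : ∀ x ∈ Ioo (-1 : ℝ) 1, HasDerivAt g (g' x) x)
    (hL2 : IntegrableOn (fun x => g' x ^ 2 * semicircleDensity x) (Ioo (-1 : ℝ) 1))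
    {x y : ℝ} (hx : x ∈ Ioo (-1 : ℝ) 1) (hy : y ∈ Ioo (-1 : ℝ) 1) (hyx : y ≤ x) :
    |g x - g y| ≤ 2 * Real.sqrt (∫ t in Ioo (-1 : ℝ) 1, g' t ^ 2 * semicircleDensity t) *
        Real.sqrt |Real.arcsin x - Real.arcsin y| ∧
    |g x - g y| ≤ 4 * Real.sqrt (∫ t in Ioo (-1 : ℝ) 1, g' t ^ 2 * semicircleDensity t) *
        |x - y| ^ ((1 : ℝ) / 4) := by
  obtain ⟨hy1, hy2⟩ := hy
  obtain ⟨hx1, hx2⟩ := hx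
  have hπ := Real.pi_pos
  set A := ∫ t in Ioo (-1 : ℝ) 1, g' t ^ 2 * semicircleDensity t with hAdef
  have hsub : Icc y x ⊆ Ioo (-1 : ℝ) 1 := fun t ht =>
    ⟨lt_of_lt_of_le hy1 ht.1, lt_of_le_of_lt ht.2 hx2⟩
  have hsub' : Ioc y x ⊆ Ioo (-1 : ℝ) 1 := fun t ht => hsub (Ioc_subset_Icc_self ht)
  have hApos : 0 ≤ A := by
    refine setIntegral_nonneg measurableSet_Ioo fun t _ => ?_
    unfold semicircleDensity
    positivity
  -- measurability of g' on Ioc y x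
  have hae : (fun t => deriv g t) =ᵐ[volume.restrict (Ioc y x)] g' := by
    refine (ae_restrict_iff' measurableSet_Ioc).2 (Filter.Eventually.of_forall fun t ht => ?_)
    exact (hderiv t (hsub' ht)).deriv
  have hg'meas : AEStronglyMeasurable g' (volume.restrict (Ioc y x)) :=
    ((measurable_deriv g).aestronglyMeasurable.restrict).congr hae
  have hw1 : IntegrableOn (fun t => g' t ^ 2 * semicircleDensity t) (Ioc y x) :=
    hL2.mono_set hsub'
  -- lower bound on the semicircle density on [y,x]
  set m := min (1 - y ^ 2) (1 - x ^ 2) with hm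
  have hmpos : 0 < m :=
    lt_min (pos_one_sub_sq hy1 hx2 (left_mem_Icc.2 hyx)) (pos_one_sub_sq hy1 hx2 (right_mem_Icc.2 hyx))
  have hmle : ∀ t ∈ Ioc y x, m ≤ 1 - t ^ 2 := by
    intro t ht
    rcases le_total t 0 with h0 | h0
    · have h : t ^ 2 ≤ y ^ 2 := by nlinarith [ht.1]
      calc m ≤ 1 - y ^ 2 := min_le_left _ _
        _ ≤ 1 - t ^ 2 := by linarith
    · have h : t ^ 2 ≤ x ^ 2 := by nlinarith [ht.2]
      calc m ≤ 1 - x ^ 2 := min_le_right _ _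
        _ ≤ 1 - t ^ 2 := by linarith
  set c := (2 / π) * Real.sqrt m with hc
  have hcpos : 0 < c := by positivity
  have hwlb : ∀ t ∈ Ioc y x, c ≤ semicircleDensity t := by
    intro t ht
    unfold semicircleDensity
    rw [hc]
    exact mul_le_mul_of_nonneg_left (Real.sqrt_le_sqrt (hmle t ht)) (by positivity)
  -- g'^2 is integrable on Ioc y x
  have hsqm : AEStronglyMeasurable (fun t => g' t ^ 2) (volume.restrict (Ioc y x)) := by
    exact hg'meas.pow 2
  have hsq : IntegrableOn (fun t => g' t ^ 2) (Ioc y x) := by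
    refine Integrable.mono' (hw1.const_mul c⁻¹) hsqm ?_
    refine (ae_restrict_iff' measurableSet_Ioc).2 (Filter.Eventually.of_forall fun t ht => ?_)
    have hwt := hwlb t ht
    rw [Real.norm_eq_abs, abs_of_nonneg (sq_nonneg _)]
    have h1 : g' t ^ 2 * c ≤ g' t ^ 2 * semicircleDensity t :=
      mul_le_mul_of_nonneg_left hwt (sq_nonneg _)
    calc g' t ^ 2 = c⁻¹ * (g' t ^ 2 * c) := by field_simp
      _ ≤ c⁻¹ * (g' t ^ 2 * semicircleDensity t) :=
          mul_le_mul_of_nonneg_left h1 (inv_nonneg.2 hcpos.le)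
  have hg'int : IntegrableOn g' (Ioc y x) := by
    have hone : IntegrableOn (fun _ : ℝ => (1 : ℝ)) (Ioc y x) :=
      integrableOn_const measure_Ioc_lt_top.ne
    refine Integrable.mono' ((hsq.add hone).div_const 2) hg'meas ?_
    refine Filter.Eventually.of_forall fun t => ?_
    rw [Real.norm_eq_abs]
    simp only [Pi.add_apply]
    nlinarith [sq_nonneg (|g' t| - 1), sq_abs (g' t)]
  have hIInt : IntervalIntegrable g' volume y x :=
    (intervalIntegrable_iff_integrableOn_Ioc_of_le hyx).2 hg'int
  have hftc : (∫ t in y..x, g' t) = g x - g y := by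
    apply intervalIntegral.integral_eq_sub_of_hasDerivAt
    · intro t ht
      rw [uIcc_of_le hyx] at ht
      exact hderiv t (hsub ht)
    · exact hIInt
  have habs : |g x - g y| ≤ ∫ t in Ioc y x, |g' t| := by
    rw [← hftc]
    calc |∫ t in y..x, g' t| ≤ ∫ t in y..x, |g' t| :=
        intervalIntegral.abs_integral_le_integral_abs hyx
      _ = ∫ t in Ioc y x, |g' t| := intervalIntegral.integral_of_le hyx
  -- arcsin integral
  set I := ∫ t in y..x, (Real.sqrt (1 - t ^ 2))⁻¹ with hIdef
  have hI_eq : I = Real.arcsin x - Real.arcsin y := integral_inv_sqrt_eq hy1 hx2 hyx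
  have hI_nonneg : 0 ≤ I := by
    refine intervalIntegral.integral_nonneg hyx fun t _ => ?_
    positivity
  have hI_le : I ≤ 4 * Real.sqrt (x - y) := integral_inv_sqrt_bound hy1 hx2 hyx
  set B := ∫ t in Ioc y x, (π / 2) * (Real.sqrt (1 - t ^ 2))⁻¹ with hBdef
  have hinvint : IntegrableOn (fun t : ℝ => (Real.sqrt (1 - t ^ 2))⁻¹) (Ioc y x) :=
    ((cont_inv_sqrt hy1 hx2).integrableOn_Icc).mono_set Ioc_subset_Icc_self
  have hBint : IntegrableOn (fun t : ℝ => (π / 2) * (Real.sqrt (1 - t ^ 2))⁻¹) (Ioc y x) :=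
    hinvint.const_mul _
  have hB_eq : B = (π / 2) * I := by
    rw [hBdef, hIdef, intervalIntegral.integral_of_le hyx, MeasureTheory.integral_const_mul]
  have hBnonneg : 0 ≤ B := by
    rw [hB_eq]; exact mul_nonneg (by positivity) hI_nonneg
  -- the AM-GM / Cauchy-Schwarz bound
  have key_eps : ∀ ε : ℝ, 0 < ε → |g x - g y| ≤ (ε * A + (1 / ε) * B) / 2 := by
    intro ε hε
    have hptw : ∀ t ∈ Ioc y x, |g' t| ≤
        (ε * (g' t ^ 2 * semicircleDensity t) + (1 / ε) * ((π / 2) * (Real.sqrt (1 - t ^ 2))⁻¹)) / 2 := by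
      intro t ht
      have hspos : 0 < Real.sqrt (1 - t ^ 2) :=
        Real.sqrt_pos.2 (pos_one_sub_sq hy1 hx2 (Ioc_subset_Icc_self ht))
      set u := ε * ((2 / π) * Real.sqrt (1 - t ^ 2)) with hu
      have hupos : 0 < u := by positivity
      have hkey : 2 * |g' t| ≤ u * g' t ^ 2 + u⁻¹ := by
        rw [← mul_le_mul_iff_of_pos_right hupos]
        have hrw : (u * g' t ^ 2 + u⁻¹) * u = u ^ 2 * g' t ^ 2 + 1 := by
          field_simp
        rw [hrw]
        nlinarith [sq_nonneg (u * |g' t| - 1), sq_abs (g' t)]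
      have hinv : u⁻¹ = (1 / ε) * ((π / 2) * (Real.sqrt (1 - t ^ 2))⁻¹) := by
        rw [hu]
        field_simp
      have hmul : u * g' t ^ 2 = ε * (g' t ^ 2 * semicircleDensity t) := by
        unfold semicircleDensity; rw [hu]; ring
      rw [← hmul, ← hinv]
      linarith
    have hA'le : (∫ t in Ioc y x, g' t ^ 2 * semicircleDensity t) ≤ A := by
      refine setIntegral_mono_set hL2 ?_ (HasSubset.Subset.eventuallyLE hsub')
      refine Filter.Eventually.of_forall fun t => ?_
      unfold semicircleDensity
      positivity
    have hmono := setIntegral_mono_on hg'int.abs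
      (((hw1.const_mul ε).add (hBint.const_mul (1 / ε))).div_const 2)
      measurableSet_Ioc hptw
    have hcomp : (∫ t in Ioc y x,
        (ε * (g' t ^ 2 * semicircleDensity t) + (1 / ε) * ((π / 2) * (Real.sqrt (1 - t ^ 2))⁻¹)) / 2)
        = (ε * (∫ t in Ioc y x, g' t ^ 2 * semicircleDensity t) + (1 / ε) * B) / 2 := by
      rw [integral_div, MeasureTheory.integral_add (hw1.const_mul ε) (hBint.const_mul (1 / ε)),
        MeasureTheory.integral_const_mul, MeasureTheory.integral_const_mul, hBdef]
    calc |g x - g y| ≤ ∫ t in Ioc y x, |g' t| := habs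
      _ ≤ (ε * (∫ t in Ioc y x, g' t ^ 2 * semicircleDensity t) + (1 / ε) * B) / 2 := by
          rw [← hcomp]; exact hmono
      _ ≤ (ε * A + (1 / ε) * B) / 2 := by
          have := mul_le_mul_of_nonneg_left hA'le hε.le
          linarith
  have hmain : |g x - g y| ≤ Real.sqrt (A * B) := amgm_to_sqrt hApos hBnonneg key_eps
  have hsqrt2 : Real.sqrt (π / 2) ≤ 2 := by
    have h4 : π / 2 ≤ 4 := by nlinarith [Real.pi_le_four]
    calc Real.sqrt (π / 2) ≤ Real.sqrt 4 := Real.sqrt_le_sqrt h4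
      _ = 2 := by
        rw [show (4 : ℝ) = 2 ^ 2 by norm_num, Real.sqrt_sq (by norm_num)]
  have h1' : |g x - g y| ≤ 2 * Real.sqrt A * Real.sqrt I := by
    calc |g x - g y| ≤ Real.sqrt (A * B) := hmain
      _ = Real.sqrt A * Real.sqrt B := Real.sqrt_mul hApos _
      _ = Real.sqrt A * (Real.sqrt (π / 2) * Real.sqrt I) := by
          rw [hB_eq, Real.sqrt_mul (by positivity)]
      _ ≤ Real.sqrt A * (2 * Real.sqrt I) := by
          refine mul_le_mul_of_nonneg_left ?_ (Real.sqrt_nonneg _)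
          exact mul_le_mul_of_nonneg_right hsqrt2 (Real.sqrt_nonneg _)
      _ = 2 * Real.sqrt A * Real.sqrt I := by ring
  have habs_eq : |Real.arcsin x - Real.arcsin y| = I := by
    rw [← hI_eq, abs_of_nonneg hI_nonneg]
  constructor
  · rw [habs_eq]; exact h1'
  · have hxy : |x - y| = x - y := abs_of_nonneg (by linarith)
    have hsI : Real.sqrt I ≤ Real.sqrt (4 * Real.sqrt (x - y)) := Real.sqrt_le_sqrt hI_le
    have hs4 : Real.sqrt (4 * Real.sqrt (x - y)) = 2 * Real.sqrt (Real.sqrt (x - y)) := by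
      rw [Real.sqrt_mul (by norm_num),
        show (4 : ℝ) = 2 ^ 2 by norm_num, Real.sqrt_sq (by norm_num)]
    calc |g x - g y| ≤ 2 * Real.sqrt A * Real.sqrt I := h1'
      _ ≤ 2 * Real.sqrt A * (2 * Real.sqrt (Real.sqrt (x - y))) := by
          rw [← hs4]
          exact mul_le_mul_of_nonneg_left hsI (by positivity)
      _ = 4 * Real.sqrt A * Real.sqrt (Real.sqrt (x - y)) := by ring
      _ = 4 * Real.sqrt A * |x - y| ^ ((1 : ℝ) / 4) := by
          rw [hxy, sqrt_sqrt_eq_rpow (by linarith)]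

/-- for `g` in the Sobolev space `H` (mean zero w.r.t. the arcsine law,
`g ∈ L²(ϱ)`, `g' ∈ L²(μ_sc)`), one has
`|g(x)-g(y)| ≤ 2‖g‖·|arcsin x - arcsin y|^{1/2}` for `x,y ∈ (-1,1)`, and `g` is
`(1/4)`-Hölder with a universal constant: `|g(x)-g(y)| ≤ C‖g‖·|x-y|^{1/4}`. -/
theorem sobolev_holder_bound :
    ∃ C : ℝ, 0 < C ∧
      ∀ (g g' : ℝ → ℝ),
        (∀ x ∈ Ioo (-1 : ℝ) 1, HasDerivAt g (g' x) x) →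
        IntegrableOn (fun x => g x ^ 2 * arcsineDensity x) (Ioo (-1 : ℝ) 1) →
        IntegrableOn (fun x => g' x ^ 2 * semicircleDensity x) (Ioo (-1 : ℝ) 1) →
        (∫ x in Ioo (-1 : ℝ) 1, g x * arcsineDensity x) = 0 →
        ∀ x ∈ Ioo (-1 : ℝ) 1, ∀ y ∈ Ioo (-1 : ℝ) 1,
          |g x - g y| ≤ 2 * Real.sqrt (∫ t in Ioo (-1 : ℝ) 1, g' t ^ 2 * semicircleDensity t) *
              Real.sqrt |Real.arcsin x - Real.arcsin y| ∧
          |g x - g y| ≤ C * Real.sqrt (∫ t in Ioo (-1 : ℝ) 1, g' t ^ 2 * semicircleDensity t) *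
              |x - y| ^ ((1 : ℝ) / 4) := by
  refine ⟨4, by norm_num, ?_⟩
  intro g g' hderiv _ hL2 _ x hx y hy
  rcases le_total y x with h | h
  · exact key_bound g g' hderiv hL2 hx hy h
  · have hk := key_bound g g' hderiv hL2 hy hx h
    rw [abs_sub_comm (g x) (g y), abs_sub_comm (Real.arcsin x) (Real.arcsin y),
      abs_sub_comm x y]
    exact hk
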